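/- For arbitrary input data streams X, the online change-point detector OnlinePCPD(X, P_0, P_1, ε, n, T) — which runs AboveThresh with threshold noise Lap(4A/ε) and per-query noise Lap(8A/ε) on the windowed queries ℓ_j = max_{j−n+1≤k≤j} ℓ(k), and upon exceeding the noisy threshold outputs OfflinePCPD on the current window of size n with privacy parameter ε/2 — is (ε,0)-differentially private: for any two neighboring streams X, X' and any set S of possible outputs, Pr[OnlinePCPD(X) ∈ S] ≤ e^ε · Pr[OnlinePCPD(X') ∈ S]. -/

import Mathlib

open MeasureTheory ProbabilityTheory

/-- The Laplace distribution with scale `b`, with density `(1/(2b)) exp (-|x|/b)`. -/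
noncomputable def laplaceMeasure (b : ℝ) : Measure ℝ :=
  volume.withDensity fun x => ENNReal.ofReal (Real.exp (-|x| / b) / (2 * b))

/-- `P` is a probability density on `ℝ`. -/
structure IsDensity (P : ℝ → ℝ) : Prop where
  measurable : Measurable P
  nonneg : ∀ x, 0 ≤ P x
  integral_one : ∫ x, P x = 1

/-- Partial log-likelihood ratio `ℓ(k) = ∑_{i=k}^j log (P₁ x_i / P₀ x_i)` for the
stream `X` at current time `j`. -/
noncomputable def ell (P₀ P₁ : ℝ → ℝ) (X : ℕ → ℝ) (k j : ℕ) : ℝ :=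
  ∑ m ∈ Finset.Icc k j, Real.log (P₁ (X m) / P₀ (X m))

/-- The `AboveThresh` test of `OnlinePCPD` fires at time `j`: the (noisy) windowed
statistic `ℓ_j = max_{j-n+1 ≤ k ≤ j} ℓ(k)` plus noise `Zω` exceeds the noisy threshold
`T + νω`.  (The maximum exceeds the threshold iff some term does.) -/
def Triggers (P₀ P₁ : ℝ → ℝ) (X : ℕ → ℝ) (n : ℕ) (T νω Zω : ℝ) (j : ℕ) : Prop :=
  ∃ k ∈ Finset.Icc (j - n + 1) j, T + νω < ell P₀ P₁ X k j + Zω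

/-- `OnlinePCPD` halts at time `j`: the test fires at `j` and at no earlier time. -/
def HaltsAt {Ω : Type*} (P₀ P₁ : ℝ → ℝ) (X : ℕ → ℝ) (n : ℕ) (T : ℝ)
    (ν : Ω → ℝ) (Z : ℕ → Ω → ℝ) (j : ℕ) (ω : Ω) : Prop :=
  n ≤ j ∧ Triggers P₀ P₁ X n T (ν ω) (Z j ω) j ∧
    ∀ j', n ≤ j' → j' < j → ¬ Triggers P₀ P₁ X n T (ν ω) (Z j' ω) j'

lemma laplace_dens_measurable (b : ℝ) :
    Measurable fun x : ℝ => ENNReal.ofReal (Real.exp (-|x| / b) / (2 * b)) := by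
  apply Measurable.ennreal_ofReal
  fun_prop

lemma laplaceMeasure_singleton (b x : ℝ) : laplaceMeasure b {x} = 0 :=
  (withDensity_absolutelyContinuous _ _) (measure_singleton x)

lemma laplaceMeasure_eq_zero {b : ℝ} (hb : b ≤ 0) : laplaceMeasure b = 0 := by
  have h : (fun x : ℝ => ENNReal.ofReal (Real.exp (-|x| / b) / (2 * b)))
      = fun _ => (0 : ENNReal) := by
    funext x
    rcases eq_or_lt_of_le hb with hb0 | hb0
    · subst hb0; norm_num
    · apply ENNReal.ofReal_eq_zero.mpr
      apply div_nonpos_of_nonneg_of_nonpos (Real.exp_nonneg _)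
      linarith
  rw [laplaceMeasure, h]
  simp [withDensity_zero]

lemma laplace_translate {b : ℝ} (hb : 0 < b) (t : ℝ) {B : Set ℝ} (hB : MeasurableSet B) :
    laplaceMeasure b ((fun y => y + t) ⁻¹' B)
      ≤ ENNReal.ofReal (Real.exp (|t| / b)) * laplaceMeasure b B := by
  set dens := fun x : ℝ => ENNReal.ofReal (Real.exp (-|x| / b) / (2 * b)) with hdens
  have hdm : Measurable dens := laplace_dens_measurable b
  have hpre : MeasurableSet ((fun y => y + t) ⁻¹' B) := hB.preimage (by fun_prop)
  rw [laplaceMeasure, withDensity_apply _ hpre, withDensity_apply _ hB]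
  have h1 : ∫⁻ x in (fun y => y + t) ⁻¹' B, dens x ∂volume
      = ∫⁻ x, Set.indicator B (fun y => dens (y - t)) (x + t) ∂volume := by
    rw [← lintegral_indicator hpre]
    congr 1
    funext x
    by_cases hx : x + t ∈ B
    · rw [Set.indicator_of_mem hx, Set.indicator_of_mem (by exact hx)]
      simp
    · rw [Set.indicator_of_notMem hx, Set.indicator_of_notMem (by exact hx)]
  have h2 : ∫⁻ x, Set.indicator B (fun y => dens (y - t)) (x + t) ∂volume
      = ∫⁻ x, Set.indicator B (fun y => dens (y - t)) x ∂volume :=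
    (measurePreserving_add_right volume t).lintegral_comp
      ((hdm.comp (by fun_prop)).indicator hB)
  have h3 : ∀ x, Set.indicator B (fun y => dens (y - t)) x
      ≤ Set.indicator B (fun y => ENNReal.ofReal (Real.exp (|t| / b)) * dens y) x := by
    intro x
    apply Set.indicator_le_indicator
    rw [hdens]
    dsimp only
    rw [← ENNReal.ofReal_mul (Real.exp_nonneg _)]
    apply ENNReal.ofReal_le_ofReal
    have hexp : Real.exp (-|x - t| / b) ≤ Real.exp (|t| / b) * Real.exp (-|x| / b) := by
      rw [← Real.exp_add]
      apply Real.exp_le_exp.mpr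
      rw [← add_div, div_le_div_iff_of_pos_right hb]
      have := abs_sub_abs_le_abs_sub x t
      linarith
    calc Real.exp (-|x - t| / b) / (2 * b)
        ≤ Real.exp (|t| / b) * Real.exp (-|x| / b) / (2 * b) := by
          apply div_le_div_of_nonneg_right hexp (by positivity)
      _ = Real.exp (|t| / b) * (Real.exp (-|x| / b) / (2 * b)) := by ring
  calc ∫⁻ x in (fun y => y + t) ⁻¹' B, dens x ∂volume
      = ∫⁻ x, Set.indicator B (fun y => dens (y - t)) x ∂volume := by rw [h1, h2]
    _ ≤ ∫⁻ x, Set.indicator B (fun y => ENNReal.ofReal (Real.exp (|t| / b)) * dens y) x ∂volume :=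
        lintegral_mono h3
    _ = ∫⁻ x in B, ENNReal.ofReal (Real.exp (|t| / b)) * dens x ∂volume := by
        rw [lintegral_indicator hB]
    _ = ENNReal.ofReal (Real.exp (|t| / b)) * ∫⁻ x in B, dens x ∂volume :=
        lintegral_const_mul' _ _ ENNReal.ofReal_ne_top

lemma prob_shift {Ω γ : Type*} [MeasurableSpace Ω] [MeasurableSpace γ]
    (Prb : Measure Ω) [IsProbabilityMeasure Prb]
    {f : Ω → ℝ} {g : Ω → γ} (hf : Measurable f) (hg : Measurable g)
    (hind : IndepFun g f Prb) {b : ℝ} (hb : 0 < b)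
    (hlaw : Measure.map f Prb = laplaceMeasure b) (t : ℝ)
    {D : Set (γ × ℝ)} (hD : MeasurableSet D) :
    Prb {ω | (g ω, f ω + t) ∈ D}
      ≤ ENNReal.ofReal (Real.exp (|t| / b)) * Prb {ω | (g ω, f ω) ∈ D} := by
  haveI : IsProbabilityMeasure (Measure.map f Prb) := Measure.isProbabilityMeasure_map hf.aemeasurable
  haveI : IsProbabilityMeasure (Measure.map g Prb) := Measure.isProbabilityMeasure_map hg.aemeasurable
  have hmap : Measure.map (fun ω => (g ω, f ω)) Prb
      = (Measure.map g Prb).prod (Measure.map f Prb) :=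
    (indepFun_iff_map_prod_eq_prod_map_map hg.aemeasurable hf.aemeasurable).mp hind
  set Dt : Set (γ × ℝ) := (fun p : γ × ℝ => (p.1, p.2 + t)) ⁻¹' D with hDt_def
  have hDt : MeasurableSet Dt := hD.preimage (measurable_fst.prodMk (measurable_snd.add_const t))
  have hL : Prb {ω | (g ω, f ω + t) ∈ D}
      = ((Measure.map g Prb).prod (Measure.map f Prb)) Dt := by
    rw [← hmap, Measure.map_apply (hg.prodMk hf) hDt]
    rfl
  have hR : Prb {ω | (g ω, f ω) ∈ D}
      = ((Measure.map g Prb).prod (Measure.map f Prb)) D := by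
    rw [← hmap, Measure.map_apply (hg.prodMk hf) hD]
    rfl
  rw [hL, hR, Measure.prod_apply hDt, Measure.prod_apply hD]
  rw [← lintegral_const_mul' _ _ ENNReal.ofReal_ne_top]
  apply lintegral_mono
  intro x
  have hsec : Prod.mk x ⁻¹' Dt = (fun y => y + t) ⁻¹' (Prod.mk x ⁻¹' D) := rfl
  dsimp only
  rw [hsec, hlaw]
  exact laplace_translate hb t (measurable_prodMk_left hD)

lemma sub_eq_zero_prob {Ω : Type*} [MeasurableSpace Ω]
    (Prb : Measure Ω) [IsProbabilityMeasure Prb]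
    {f g : Ω → ℝ} (hf : Measurable f) (hg : Measurable g)
    (hind : IndepFun f g Prb) {b : ℝ}
    (hlaw : Measure.map g Prb = laplaceMeasure b) (a : ℝ) :
    Prb {ω | f ω - g ω = a} = 0 := by
  haveI : IsProbabilityMeasure (Measure.map f Prb) := Measure.isProbabilityMeasure_map hf.aemeasurable
  haveI : IsProbabilityMeasure (Measure.map g Prb) := Measure.isProbabilityMeasure_map hg.aemeasurable
  have hmap : Measure.map (fun ω => (f ω, g ω)) Prb
      = (Measure.map f Prb).prod (Measure.map g Prb) :=
    (indepFun_iff_map_prod_eq_prod_map_map hf.aemeasurable hg.aemeasurable).mp hind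
  have hD : MeasurableSet {p : ℝ × ℝ | p.1 - p.2 = a} :=
    (isClosed_eq (by fun_prop) continuous_const).measurableSet
  have hL : Prb {ω | f ω - g ω = a}
      = ((Measure.map f Prb).prod (Measure.map g Prb)) {p : ℝ × ℝ | p.1 - p.2 = a} := by
    rw [← hmap, Measure.map_apply (hf.prodMk hg) hD]
    rfl
  rw [hL, Measure.prod_apply hD]
  have : ∀ x : ℝ, (Measure.map g Prb) (Prod.mk x ⁻¹' {p : ℝ × ℝ | p.1 - p.2 = a}) = 0 := by
    intro x
    have hset : Prod.mk x ⁻¹' {p : ℝ × ℝ | p.1 - p.2 = a} = {x - a} := by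
      ext y; constructor
      · intro hy; simp only [Set.mem_preimage, Set.mem_setOf_eq] at hy
        simp only [Set.mem_singleton_iff]; linarith
      · intro hy; simp only [Set.mem_singleton_iff] at hy
        simp only [Set.mem_preimage, Set.mem_setOf_eq]; linarith
    rw [hset, hlaw]
    exact laplaceMeasure_singleton b (x - a)
  simp only [this]
  simp

/-- Shift bound for one coordinate of an independent family. -/
lemma step_bound {Ω ι : Type*} [MeasurableSpace Ω]
    (Prb : Measure Ω) [IsProbabilityMeasure Prb]
    (F : ι → Ω → ℝ) (hFmeas : ∀ i, Measurable (F i))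
    (hindep : iIndepFun F Prb)
    (Sfin : Finset ι) (i₀ : ι) (hi₀ : i₀ ∉ Sfin) {b : ℝ} (hb : 0 < b)
    (hlaw : Measure.map (F i₀) Prb = laplaceMeasure b) (t : ℝ)
    {D : Set ((Sfin → ℝ) × ℝ)} (hD : MeasurableSet D) :
    Prb {ω | ((fun i : Sfin => F i ω), F i₀ ω + t) ∈ D}
      ≤ ENNReal.ofReal (Real.exp (|t| / b)) *
        Prb {ω | ((fun i : Sfin => F i ω), F i₀ ω) ∈ D} := by
  have hg : Measurable (fun ω => fun i : Sfin => F i ω) :=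
    measurable_pi_lambda _ fun i => hFmeas i
  have hind0 : IndepFun (fun ω => fun i : Sfin => F i ω)
      (fun ω => fun i : ({i₀} : Finset ι) => F i ω) Prb :=
    hindep.indepFun_finset Sfin {i₀} (Finset.disjoint_singleton_right.mpr hi₀) hFmeas
  have hind : IndepFun (fun ω => fun i : Sfin => F i ω) (F i₀) Prb := by
    have := hind0.comp (measurable_id)
      (measurable_pi_apply (⟨i₀, Finset.mem_singleton_self i₀⟩ : ({i₀} : Finset ι)))
    exact this
  exact prob_shift Prb (hFmeas i₀) hg hind hb hlaw t hD

def Phi (P₀ P₁ : ℝ → ℝ) (Y : ℕ → ℝ) (n : ℕ) (T : ℝ) (j c : ℕ) :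
    Set (ℝ × (ℕ → ℝ) × (ℕ → ℝ)) :=
  {p | (∃ k ∈ Finset.Icc (j - n + 1) j, T + p.1 < ell P₀ P₁ Y k j + p.2.1 j) ∧
    (∀ j' ∈ Finset.Ico n j, ∀ k ∈ Finset.Icc (j' - n + 1) j',
      ell P₀ P₁ Y k j' + p.2.1 j' ≤ T + p.1) ∧
    (∀ k ∈ Finset.Icc 1 n, k ≠ c →
      ell P₀ P₁ Y (j - n + k) j + p.2.2 k < ell P₀ P₁ Y (j - n + c) j + p.2.2 c)}

lemma measurableSet_Phi (P₀ P₁ : ℝ → ℝ) (Y : ℕ → ℝ) (n : ℕ) (T : ℝ) (j c : ℕ) :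
    MeasurableSet (Phi P₀ P₁ Y n T j c) := by
  have hz : ∀ m : ℕ, Measurable fun p : ℝ × (ℕ → ℝ) × (ℕ → ℝ) => p.2.1 m := fun m =>
    (measurable_pi_apply m).comp (measurable_fst.comp measurable_snd)
  have hw : ∀ m : ℕ, Measurable fun p : ℝ × (ℕ → ℝ) × (ℕ → ℝ) => p.2.2 m := fun m =>
    (measurable_pi_apply m).comp (measurable_snd.comp measurable_snd)
  have h1 : MeasurableSet {p : ℝ × (ℕ → ℝ) × (ℕ → ℝ) |
      ∃ k ∈ Finset.Icc (j - n + 1) j, T + p.1 < ell P₀ P₁ Y k j + p.2.1 j} := by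
    have : {p : ℝ × (ℕ → ℝ) × (ℕ → ℝ) |
        ∃ k ∈ Finset.Icc (j - n + 1) j, T + p.1 < ell P₀ P₁ Y k j + p.2.1 j}
        = ⋃ k ∈ Finset.Icc (j - n + 1) j,
          {p : ℝ × (ℕ → ℝ) × (ℕ → ℝ) | T + p.1 < ell P₀ P₁ Y k j + p.2.1 j} := by
      ext p; simp
    rw [this]
    exact (Finset.Icc (j - n + 1) j).measurableSet_biUnion fun k _ =>
      measurableSet_lt (measurable_const.add measurable_fst) (measurable_const.add (hz j))
  have h2 : MeasurableSet {p : ℝ × (ℕ → ℝ) × (ℕ → ℝ) |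
      ∀ j' ∈ Finset.Ico n j, ∀ k ∈ Finset.Icc (j' - n + 1) j',
        ell P₀ P₁ Y k j' + p.2.1 j' ≤ T + p.1} := by
    have : {p : ℝ × (ℕ → ℝ) × (ℕ → ℝ) |
        ∀ j' ∈ Finset.Ico n j, ∀ k ∈ Finset.Icc (j' - n + 1) j',
          ell P₀ P₁ Y k j' + p.2.1 j' ≤ T + p.1}
        = ⋂ j' ∈ Finset.Ico n j, ⋂ k ∈ Finset.Icc (j' - n + 1) j',
          {p : ℝ × (ℕ → ℝ) × (ℕ → ℝ) | ell P₀ P₁ Y k j' + p.2.1 j' ≤ T + p.1} := by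
      ext p; simp; tauto
    rw [this]
    refine MeasurableSet.biInter (Finset.Ico n j).countable_toSet fun j' _ =>
      MeasurableSet.biInter (Finset.Icc (j' - n + 1) j').countable_toSet fun k _ =>
        measurableSet_le (measurable_const.add (hz j')) (measurable_const.add measurable_fst)
  have h3 : MeasurableSet {p : ℝ × (ℕ → ℝ) × (ℕ → ℝ) |
      ∀ k ∈ Finset.Icc 1 n, k ≠ c →
        ell P₀ P₁ Y (j - n + k) j + p.2.2 k < ell P₀ P₁ Y (j - n + c) j + p.2.2 c} := by
    have : {p : ℝ × (ℕ → ℝ) × (ℕ → ℝ) |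
        ∀ k ∈ Finset.Icc 1 n, k ≠ c →
          ell P₀ P₁ Y (j - n + k) j + p.2.2 k < ell P₀ P₁ Y (j - n + c) j + p.2.2 c}
        = ⋂ k ∈ Finset.Icc 1 n, {p : ℝ × (ℕ → ℝ) × (ℕ → ℝ) | k ≠ c →
          ell P₀ P₁ Y (j - n + k) j + p.2.2 k < ell P₀ P₁ Y (j - n + c) j + p.2.2 c} := by
      ext p; simp
    rw [this]
    refine MeasurableSet.biInter (Finset.Icc 1 n).countable_toSet fun k _ => ?_
    by_cases hkc : k = c
    · simp [hkc]
    · have : {p : ℝ × (ℕ → ℝ) × (ℕ → ℝ) | k ≠ c →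
          ell P₀ P₁ Y (j - n + k) j + p.2.2 k < ell P₀ P₁ Y (j - n + c) j + p.2.2 c}
          = {p : ℝ × (ℕ → ℝ) × (ℕ → ℝ) |
            ell P₀ P₁ Y (j - n + k) j + p.2.2 k < ell P₀ P₁ Y (j - n + c) j + p.2.2 c} := by
        ext p; simp [hkc]
      rw [this]
      exact measurableSet_lt (measurable_const.add (hw k)) (measurable_const.add (hw c))
  exact (h1.inter (h2.inter h3) : _)

lemma Phi_congr_mp {P₀ P₁ : ℝ → ℝ} {Y : ℕ → ℝ} {n : ℕ} {T : ℝ} {j c : ℕ}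
    (hnj : n ≤ j) (hc : c ∈ Finset.Icc 1 n)
    {p q : ℝ × (ℕ → ℝ) × (ℕ → ℝ)} (h1 : p.1 = q.1)
    (hz : ∀ m, n ≤ m → m ≤ j → p.2.1 m = q.2.1 m)
    (hw : ∀ k, k ∈ Finset.Icc 1 n → p.2.2 k = q.2.2 k)
    (hp : p ∈ Phi P₀ P₁ Y n T j c) : q ∈ Phi P₀ P₁ Y n T j c := by
  obtain ⟨⟨k, hk, hlt⟩, h2, h3⟩ := hp
  refine ⟨⟨k, hk, ?_⟩, ?_, ?_⟩
  · rw [← h1, ← hz j hnj le_rfl]; exact hlt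
  · intro j' hj' k' hk'
    have hm := Finset.mem_Ico.mp hj'
    rw [← h1, ← hz j' hm.1 hm.2.le]
    exact h2 j' hj' k' hk'
  · intro k' hk' hne
    rw [← hw k' hk', ← hw c hc]
    exact h3 k' hk' hne

lemma Phi_congr {P₀ P₁ : ℝ → ℝ} {Y : ℕ → ℝ} {n : ℕ} {T : ℝ} {j c : ℕ}
    (hnj : n ≤ j) (hc : c ∈ Finset.Icc 1 n)
    {p q : ℝ × (ℕ → ℝ) × (ℕ → ℝ)} (h1 : p.1 = q.1)
    (hz : ∀ m, n ≤ m → m ≤ j → p.2.1 m = q.2.1 m)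
    (hw : ∀ k, k ∈ Finset.Icc 1 n → p.2.2 k = q.2.2 k) :
    p ∈ Phi P₀ P₁ Y n T j c ↔ q ∈ Phi P₀ P₁ Y n T j c :=
  ⟨Phi_congr_mp hnj hc h1 hz hw,
   Phi_congr_mp hnj hc h1.symm (fun m h h' => (hz m h h').symm)
     (fun k h => (hw k h).symm)⟩

lemma ell_eq (P₀ P₁ : ℝ → ℝ) {X X' : ℕ → ℝ} {i₀ : ℕ}
    (hXeq : ∀ m, m ≠ i₀ → X m = X' m) (k j : ℕ) :
    ell P₀ P₁ X' k j = ell P₀ P₁ X k j +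
      (if i₀ ∈ Finset.Icc k j then
        (Real.log (P₁ (X' i₀) / P₀ (X' i₀)) - Real.log (P₁ (X i₀) / P₀ (X i₀))) else 0) := by
  unfold ell
  have hterm : ∀ m ∈ Finset.Icc k j, Real.log (P₁ (X' m) / P₀ (X' m))
      = Real.log (P₁ (X m) / P₀ (X m)) +
        (if m = i₀ then
          (Real.log (P₁ (X' i₀) / P₀ (X' i₀)) - Real.log (P₁ (X i₀) / P₀ (X i₀))) else 0) := by
    intro m _
    by_cases hm : m = i₀
    · subst hm; simp
    · rw [← hXeq m hm]; simp [hm]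
  rw [Finset.sum_congr rfl hterm, Finset.sum_add_distrib, Finset.sum_ite_eq']

lemma Phi_shift (P₀ P₁ : ℝ → ℝ) {X X' : ℕ → ℝ} {i₀ : ℕ}
    (hXeq : ∀ m, m ≠ i₀ → X m = X' m) {A : ℝ} (T : ℝ) {n j c : ℕ}
    (hd : |Real.log (P₁ (X' i₀) / P₀ (X' i₀)) - Real.log (P₁ (X i₀) / P₀ (X i₀))| ≤ A)
    {p : ℝ × (ℕ → ℝ) × (ℕ → ℝ)} (hp : p ∈ Phi P₀ P₁ X n T j c) :
    (p.1 + A,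
      (fun m => if m = j then p.2.1 j + 2 * A else p.2.1 m),
      (fun k => if k = c then p.2.2 c +
        |Real.log (P₁ (X' i₀) / P₀ (X' i₀)) - Real.log (P₁ (X i₀) / P₀ (X i₀))|
        else p.2.2 k)) ∈ Phi P₀ P₁ X' n T j c := by
  set d := Real.log (P₁ (X' i₀) / P₀ (X' i₀)) - Real.log (P₁ (X i₀) / P₀ (X i₀)) with hd_def
  have hA0 : 0 ≤ A := le_trans (abs_nonneg d) hd
  obtain ⟨⟨k₀, hk₀, hlt⟩, h2, h3⟩ := hp
  have hdiff : ∀ k j', |ell P₀ P₁ X' k j' - ell P₀ P₁ X k j'| ≤ A := by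
    intro k j'
    rw [ell_eq P₀ P₁ hXeq k j']
    split_ifs with h
    · simpa using hd
    · simpa using hA0
  refine ⟨⟨k₀, hk₀, ?_⟩, ?_, ?_⟩
  · dsimp only
    rw [if_pos rfl]
    have := abs_le.mp (hdiff k₀ j)
    linarith
  · intro j' hj' k hk
    have hne : j' ≠ j := (Finset.mem_Ico.mp hj').2.ne
    dsimp only
    rw [if_neg hne]
    have := abs_le.mp (hdiff k j')
    have := h2 j' hj' k hk
    linarith
  · intro k hk hkc
    dsimp only
    rw [if_neg hkc, if_pos rfl]
    have hbase := h3 k hk hkc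
    have h1 := ell_eq P₀ P₁ hXeq (j - n + k) j
    have h2' := ell_eq P₀ P₁ hXeq (j - n + c) j
    have had : -|d| ≤ d := neg_abs_le d
    have had2 : d ≤ |d| := le_abs_self d
    rw [h1, h2', ← hd_def]
    split_ifs with hik hic hic <;> linarith [abs_nonneg d]

def pick {ι : Type*} [DecidableEq ι] (Sfin : Finset ι) (u : Sfin → ℝ) (i : ι) : ℝ :=
  if h : i ∈ Sfin then u ⟨i, h⟩ else 0

lemma pick_eq {ι : Type*} [DecidableEq ι] {Sfin : Finset ι} (u : Sfin → ℝ) {i : ι}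
    (h : i ∈ Sfin) : pick Sfin u i = u ⟨i, h⟩ := dif_pos h

lemma measurable_pick {ι : Type*} [DecidableEq ι] (Sfin : Finset ι) (i : ι) :
    Measurable fun u : Sfin → ℝ => pick Sfin u i := by
  unfold pick
  split_ifs with h
  · exact measurable_pi_apply _
  · exact measurable_const

/-- Theorem 8 of the paper: `OnlinePCPD` is `(ε,0)`-differentially
private for arbitrary neighboring streams `X, X'`.  The algorithm's randomness
consists of the threshold noise `ν ~ Lap(4A/ε)`, per-query noise `Z_j ~ Lap(8A/ε)`,
and the offline call's noise `W_1,…,W_n ~ Lap(2A/ε)` (privacy parameter `ε/2`), all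
jointly independent.  `κ j` (resp. `κ' j`) selects the argmax of the offline call on
the window `{x_{j-n+1},…,x_j}`, so that the full output (halting time together with
the reported change point `κ j + (j-n)`) satisfies, for every set `S` of outputs,
`Pr[out(X) ∈ S] ≤ e^ε · Pr[out(X') ∈ S]`. -/
theorem onlinePCPD_privacy
    {Ω : Type*} [MeasurableSpace Ω] (Prb : Measure Ω) [IsProbabilityMeasure Prb]
    (P₀ P₁ : ℝ → ℝ) (hP₀ : IsDensity P₀) (hP₁ : IsDensity P₁)
    (hbddAbove : BddAbove (Set.range fun x => Real.log (P₁ x / P₀ x)))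
    (hbddBelow : BddBelow (Set.range fun x => Real.log (P₁ x / P₀ x)))
    (A : ℝ)
    (hA : A = sSup (Set.range fun x => Real.log (P₁ x / P₀ x))
            - sInf (Set.range fun x => Real.log (P₁ x / P₀ x)))
    (ε : ℝ) (hε : 0 < ε) (n : ℕ) (hn : 1 ≤ n) (T : ℝ)
    (X X' : ℕ → ℝ)
    (hneighbor : ∃ j, ∀ m, m ≠ j → X m = X' m)
    (ν : Ω → ℝ) (Z W : ℕ → Ω → ℝ)
    (hνmeas : Measurable ν) (hZmeas : ∀ j, Measurable (Z j))
    (hWmeas : ∀ k, Measurable (W k))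
    (hindep : iIndepFun
        (Sum.elim (fun _ : Unit => ν) (Sum.elim Z W)) Prb)
    (hνlaw : Measure.map ν Prb = laplaceMeasure (4 * A / ε))
    (hZlaw : ∀ j, n ≤ j → Measure.map (Z j) Prb = laplaceMeasure (8 * A / ε))
    (hWlaw : ∀ k ∈ Finset.Icc 1 n, Measure.map (W k) Prb = laplaceMeasure (2 * A / ε))
    (κ κ' : ℕ → Ω → ℕ)
    (hκ : ∀ j, n ≤ j → ∀ ω, κ j ω ∈ Finset.Icc 1 n ∧ ∀ k ∈ Finset.Icc 1 n,
        ell P₀ P₁ X (j - n + k) j + W k ω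
          ≤ ell P₀ P₁ X (j - n + κ j ω) j + W (κ j ω) ω)
    (hκ' : ∀ j, n ≤ j → ∀ ω, κ' j ω ∈ Finset.Icc 1 n ∧ ∀ k ∈ Finset.Icc 1 n,
        ell P₀ P₁ X' (j - n + k) j + W k ω
          ≤ ell P₀ P₁ X' (j - n + κ' j ω) j + W (κ' j ω) ω)
    (S : Set (ℕ × ℕ)) :
    Prb {ω | ∃ j, HaltsAt P₀ P₁ X n T ν Z j ω ∧ (j, κ j ω + (j - n)) ∈ S}
      ≤ ENNReal.ofReal (Real.exp ε) *
        Prb {ω | ∃ j, HaltsAt P₀ P₁ X' n T ν Z j ω ∧ (j, κ' j ω + (j - n)) ∈ S} := by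
  classical
  obtain ⟨i₀, hXeq⟩ := hneighbor
  set d := Real.log (P₁ (X' i₀) / P₀ (X' i₀)) - Real.log (P₁ (X i₀) / P₀ (X i₀)) with hd_def
  have hApos : 0 < A := by
    by_contra hA0
    push_neg at hA0
    have hble : 4 * A / ε ≤ 0 := div_nonpos_of_nonpos_of_nonneg (by linarith) hε.le
    have h0 : laplaceMeasure (4 * A / ε) = 0 := laplaceMeasure_eq_zero hble
    haveI : IsProbabilityMeasure (Measure.map ν Prb) :=
      Measure.isProbabilityMeasure_map hνmeas.aemeasurable
    have h1 : (Measure.map ν Prb) Set.univ = 1 := measure_univ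
    rw [hνlaw, h0] at h1
    simp at h1
  have hd_le : |d| ≤ A := by
    have hs1 : Real.log (P₁ (X' i₀) / P₀ (X' i₀))
        ≤ sSup (Set.range fun x => Real.log (P₁ x / P₀ x)) := le_csSup hbddAbove ⟨X' i₀, rfl⟩
    have hs2 : sInf (Set.range fun x => Real.log (P₁ x / P₀ x))
        ≤ Real.log (P₁ (X i₀) / P₀ (X i₀)) := csInf_le hbddBelow ⟨X i₀, rfl⟩
    have hs3 : Real.log (P₁ (X i₀) / P₀ (X i₀))
        ≤ sSup (Set.range fun x => Real.log (P₁ x / P₀ x)) := le_csSup hbddAbove ⟨X i₀, rfl⟩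
    have hs4 : sInf (Set.range fun x => Real.log (P₁ x / P₀ x))
        ≤ Real.log (P₁ (X' i₀) / P₀ (X' i₀)) := csInf_le hbddBelow ⟨X' i₀, rfl⟩
    rw [hd_def, abs_le]
    constructor <;> linarith [hA]
  have hb2 : 0 < 2 * A / ε := by positivity
  have hb4 : 0 < 4 * A / ε := by positivity
  have hb8 : 0 < 8 * A / ε := by positivity
  set F : (Unit ⊕ ℕ ⊕ ℕ) → Ω → ℝ := Sum.elim (fun _ : Unit => ν) (Sum.elim Z W) with hF_def
  have hFmeas : ∀ i, Measurable (F i) := by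
    rintro (⟨⟩ | m | k)
    exacts [hνmeas, hZmeas m, hWmeas k]
  set V : Ω → ℝ × (ℕ → ℝ) × (ℕ → ℝ) :=
    fun ω => (ν ω, fun m => Z m ω, fun m => W m ω) with hV_def
  have hVmeas : Measurable V :=
    hνmeas.prodMk ((measurable_pi_lambda _ hZmeas).prodMk (measurable_pi_lambda _ hWmeas))
  set Ev : (ℕ → ℝ) → ℕ → ℕ → Set Ω := fun Y j c =>
    if (n ≤ j ∧ c ∈ Finset.Icc 1 n ∧ (j, c + (j - n)) ∈ S) then
      V ⁻¹' (Phi P₀ P₁ Y n T j c) else ∅ with hEv_def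
  have hEvmeas : ∀ Y j c, MeasurableSet (Ev Y j c) := by
    intro Y j c
    rw [hEv_def]
    dsimp only
    split_ifs
    · exact hVmeas (measurableSet_Phi P₀ P₁ Y n T j c)
    · exact MeasurableSet.empty
  set Tie : Set Ω := ⋃ t : ℕ × ℕ × ℕ,
    {ω | (t.2.1 ∈ Finset.Icc 1 n ∧ t.2.2 ∈ Finset.Icc 1 n ∧ t.2.1 ≠ t.2.2) ∧
      W t.2.1 ω - W t.2.2 ω
        = ell P₀ P₁ X (t.1 - n + t.2.2) t.1 - ell P₀ P₁ X (t.1 - n + t.2.1) t.1} with hTie_def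
  have hTie0 : Prb Tie = 0 := by
    rw [hTie_def]
    refine measure_iUnion_null fun t => ?_
    by_cases hcon : t.2.1 ∈ Finset.Icc 1 n ∧ t.2.2 ∈ Finset.Icc 1 n ∧ t.2.1 ≠ t.2.2
    · obtain ⟨h1, h2, h3⟩ := hcon
      have hind : IndepFun (W t.2.1) (W t.2.2) Prb := by
        have h := hindep.indepFun (f := F)
          (show (Sum.inr (Sum.inr t.2.1) : Unit ⊕ ℕ ⊕ ℕ) ≠ Sum.inr (Sum.inr t.2.2) by
            simp [h3])
        exact h
      have h0 := sub_eq_zero_prob Prb (hWmeas t.2.1) (hWmeas t.2.2) hind (hWlaw t.2.2 h2)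
        (ell P₀ P₁ X (t.1 - n + t.2.2) t.1 - ell P₀ P₁ X (t.1 - n + t.2.1) t.1)
      exact measure_mono_null (fun ω hω => hω.2) h0
    · exact measure_mono_null (fun ω hω => absurd hω.1 hcon) measure_empty
  have key : ∀ j c, Prb (Ev X j c) ≤ ENNReal.ofReal (Real.exp ε) * Prb (Ev X' j c) := by
    intro j c
    rw [hEv_def]
    dsimp only
    split_ifs with hcond
    swap
    · simp
    obtain ⟨hnj, hc, hS⟩ := hcond
    set S₁ : Finset (Unit ⊕ ℕ ⊕ ℕ) :=
      ((Finset.Icc n j).image fun m => (Sum.inr (Sum.inl m) : Unit ⊕ ℕ ⊕ ℕ)) ∪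
      ((Finset.Icc 1 n).image fun k => (Sum.inr (Sum.inr k) : Unit ⊕ ℕ ⊕ ℕ)) with hS₁_def
    set S₂ : Finset (Unit ⊕ ℕ ⊕ ℕ) :=
      ({Sum.inl ()} : Finset (Unit ⊕ ℕ ⊕ ℕ)) ∪
      ((Finset.Ico n j).image fun m => (Sum.inr (Sum.inl m) : Unit ⊕ ℕ ⊕ ℕ)) ∪
      ((Finset.Icc 1 n).image fun k => (Sum.inr (Sum.inr k) : Unit ⊕ ℕ ⊕ ℕ)) with hS₂_def
    set S₃ : Finset (Unit ⊕ ℕ ⊕ ℕ) :=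
      ({Sum.inl ()} : Finset (Unit ⊕ ℕ ⊕ ℕ)) ∪
      ((Finset.Icc n j).image fun m => (Sum.inr (Sum.inl m) : Unit ⊕ ℕ ⊕ ℕ)) ∪
      (((Finset.Icc 1 n).erase c).image fun k => (Sum.inr (Sum.inr k) : Unit ⊕ ℕ ⊕ ℕ))
      with hS₃_def
    have hmem₁z : ∀ m, n ≤ m → m ≤ j → (Sum.inr (Sum.inl m) : Unit ⊕ ℕ ⊕ ℕ) ∈ S₁ :=
      fun m h1 h2 => Finset.mem_union_left _
        (Finset.mem_image.mpr ⟨m, Finset.mem_Icc.mpr ⟨h1, h2⟩, rfl⟩)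
    have hmem₁w : ∀ k, k ∈ Finset.Icc 1 n → (Sum.inr (Sum.inr k) : Unit ⊕ ℕ ⊕ ℕ) ∈ S₁ :=
      fun k hk => Finset.mem_union_right _ (Finset.mem_image.mpr ⟨k, hk, rfl⟩)
    have hmem₂ν : (Sum.inl () : Unit ⊕ ℕ ⊕ ℕ) ∈ S₂ :=
      Finset.mem_union_left _ (Finset.mem_union_left _ (Finset.mem_singleton_self _))
    have hmem₂z : ∀ m, n ≤ m → m < j → (Sum.inr (Sum.inl m) : Unit ⊕ ℕ ⊕ ℕ) ∈ S₂ :=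
      fun m h1 h2 => Finset.mem_union_left _ (Finset.mem_union_right _
        (Finset.mem_image.mpr ⟨m, Finset.mem_Ico.mpr ⟨h1, h2⟩, rfl⟩))
    have hmem₂w : ∀ k, k ∈ Finset.Icc 1 n → (Sum.inr (Sum.inr k) : Unit ⊕ ℕ ⊕ ℕ) ∈ S₂ :=
      fun k hk => Finset.mem_union_right _ (Finset.mem_image.mpr ⟨k, hk, rfl⟩)
    have hmem₃ν : (Sum.inl () : Unit ⊕ ℕ ⊕ ℕ) ∈ S₃ :=
      Finset.mem_union_left _ (Finset.mem_union_left _ (Finset.mem_singleton_self _))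
    have hmem₃z : ∀ m, n ≤ m → m ≤ j → (Sum.inr (Sum.inl m) : Unit ⊕ ℕ ⊕ ℕ) ∈ S₃ :=
      fun m h1 h2 => Finset.mem_union_left _ (Finset.mem_union_right _
        (Finset.mem_image.mpr ⟨m, Finset.mem_Icc.mpr ⟨h1, h2⟩, rfl⟩))
    have hmem₃w : ∀ k, k ∈ Finset.Icc 1 n → k ≠ c →
        (Sum.inr (Sum.inr k) : Unit ⊕ ℕ ⊕ ℕ) ∈ S₃ :=
      fun k hk hkc => Finset.mem_union_right _
        (Finset.mem_image.mpr ⟨k, Finset.mem_erase.mpr ⟨hkc, hk⟩, rfl⟩)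
    have hni₁ : (Sum.inl () : Unit ⊕ ℕ ⊕ ℕ) ∉ S₁ := by
      rw [hS₁_def]; simp
    have hni₂ : (Sum.inr (Sum.inl j) : Unit ⊕ ℕ ⊕ ℕ) ∉ S₂ := by
      rw [hS₂_def]; simp [Finset.mem_Ico]
    have hni₃ : (Sum.inr (Sum.inr c) : Unit ⊕ ℕ ⊕ ℕ) ∉ S₃ := by
      rw [hS₃_def]; simp
    -- reassembly maps
    set r₁ : ((S₁ → ℝ) × ℝ) → ℝ × (ℕ → ℝ) × (ℕ → ℝ) := fun q =>
      (q.2,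
       fun m => if m = j then pick S₁ q.1 (Sum.inr (Sum.inl j)) + 2 * A
         else pick S₁ q.1 (Sum.inr (Sum.inl m)),
       fun k => if k = c then pick S₁ q.1 (Sum.inr (Sum.inr c)) + |d|
         else pick S₁ q.1 (Sum.inr (Sum.inr k))) with hr₁_def
    set r₂ : ((S₂ → ℝ) × ℝ) → ℝ × (ℕ → ℝ) × (ℕ → ℝ) := fun q =>
      (pick S₂ q.1 (Sum.inl ()),
       fun m => if m = j then q.2 else pick S₂ q.1 (Sum.inr (Sum.inl m)),
       fun k => if k = c then pick S₂ q.1 (Sum.inr (Sum.inr c)) + |d|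
         else pick S₂ q.1 (Sum.inr (Sum.inr k))) with hr₂_def
    set r₃ : ((S₃ → ℝ) × ℝ) → ℝ × (ℕ → ℝ) × (ℕ → ℝ) := fun q =>
      (pick S₃ q.1 (Sum.inl ()),
       fun m => pick S₃ q.1 (Sum.inr (Sum.inl m)),
       fun k => if k = c then q.2 else pick S₃ q.1 (Sum.inr (Sum.inr k))) with hr₃_def
    have hr₁ : Measurable r₁ := by
      rw [hr₁_def]
      refine Measurable.prodMk measurable_snd (Measurable.prodMk ?_ ?_)
      · apply measurable_pi_lambda
        intro m
        by_cases hm : m = j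
        · simp only [if_pos hm]
          exact ((measurable_pick _ _).comp measurable_fst).add_const _
        · simp only [if_neg hm]
          exact (measurable_pick _ _).comp measurable_fst
      · apply measurable_pi_lambda
        intro k
        by_cases hk : k = c
        · simp only [if_pos hk]
          exact ((measurable_pick _ _).comp measurable_fst).add_const _
        · simp only [if_neg hk]
          exact (measurable_pick _ _).comp measurable_fst
    have hr₂ : Measurable r₂ := by
      rw [hr₂_def]
      refine Measurable.prodMk ((measurable_pick _ _).comp measurable_fst)
        (Measurable.prodMk ?_ ?_)
      · apply measurable_pi_lambda
        intro m
        by_cases hm : m = j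
        · simp only [if_pos hm]
          exact measurable_snd
        · simp only [if_neg hm]
          exact (measurable_pick _ _).comp measurable_fst
      · apply measurable_pi_lambda
        intro k
        by_cases hk : k = c
        · simp only [if_pos hk]
          exact ((measurable_pick _ _).comp measurable_fst).add_const _
        · simp only [if_neg hk]
          exact (measurable_pick _ _).comp measurable_fst
    have hr₃ : Measurable r₃ := by
      rw [hr₃_def]
      refine Measurable.prodMk ((measurable_pick _ _).comp measurable_fst)
        (Measurable.prodMk (measurable_pi_lambda _ fun m =>
          (measurable_pick _ _).comp measurable_fst) ?_)
      apply measurable_pi_lambda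
      intro k
      by_cases hk : k = c
      · simp only [if_pos hk]
        exact measurable_snd
      · simp only [if_neg hk]
        exact (measurable_pick _ _).comp measurable_fst
    have hD₁ : MeasurableSet (r₁ ⁻¹' Phi P₀ P₁ X' n T j c) :=
      hr₁ (measurableSet_Phi P₀ P₁ X' n T j c)
    have hD₂ : MeasurableSet (r₂ ⁻¹' Phi P₀ P₁ X' n T j c) :=
      hr₂ (measurableSet_Phi P₀ P₁ X' n T j c)
    have hD₃ : MeasurableSet (r₃ ⁻¹' Phi P₀ P₁ X' n T j c) :=
      hr₃ (measurableSet_Phi P₀ P₁ X' n T j c)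
    -- values of `pick` on the actual tuples
    have hpz₁ : ∀ (ω : Ω) (m : ℕ), n ≤ m → m ≤ j →
        pick S₁ (fun i : S₁ => F i ω) (Sum.inr (Sum.inl m)) = Z m ω := by
      intro ω m h1 h2
      rw [pick_eq _ (hmem₁z m h1 h2)]
      rfl
    have hpw₁ : ∀ (ω : Ω) (k : ℕ), k ∈ Finset.Icc 1 n →
        pick S₁ (fun i : S₁ => F i ω) (Sum.inr (Sum.inr k)) = W k ω := by
      intro ω k hk
      rw [pick_eq _ (hmem₁w k hk)]
      rfl
    have hpν₂ : ∀ ω : Ω, pick S₂ (fun i : S₂ => F i ω) (Sum.inl ()) = ν ω := by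
      intro ω
      rw [pick_eq _ hmem₂ν]
      rfl
    have hpz₂ : ∀ (ω : Ω) (m : ℕ), n ≤ m → m < j →
        pick S₂ (fun i : S₂ => F i ω) (Sum.inr (Sum.inl m)) = Z m ω := by
      intro ω m h1 h2
      rw [pick_eq _ (hmem₂z m h1 h2)]
      rfl
    have hpw₂ : ∀ (ω : Ω) (k : ℕ), k ∈ Finset.Icc 1 n →
        pick S₂ (fun i : S₂ => F i ω) (Sum.inr (Sum.inr k)) = W k ω := by
      intro ω k hk
      rw [pick_eq _ (hmem₂w k hk)]
      rfl
    have hpν₃ : ∀ ω : Ω, pick S₃ (fun i : S₃ => F i ω) (Sum.inl ()) = ν ω := by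
      intro ω
      rw [pick_eq _ hmem₃ν]
      rfl
    have hpz₃ : ∀ (ω : Ω) (m : ℕ), n ≤ m → m ≤ j →
        pick S₃ (fun i : S₃ => F i ω) (Sum.inr (Sum.inl m)) = Z m ω := by
      intro ω m h1 h2
      rw [pick_eq _ (hmem₃z m h1 h2)]
      rfl
    have hpw₃ : ∀ (ω : Ω) (k : ℕ), k ∈ Finset.Icc 1 n → k ≠ c →
        pick S₃ (fun i : S₃ => F i ω) (Sum.inr (Sum.inr k)) = W k ω := by
      intro ω k hk hkc
      rw [pick_eq _ (hmem₃w k hk hkc)]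
      rfl
    -- pointwise inclusion into the fully shifted event
    have hA1 : V ⁻¹' Phi P₀ P₁ X n T j c
        ⊆ {ω | ((fun i : S₁ => F i ω), F (Sum.inl ()) ω + A)
            ∈ r₁ ⁻¹' Phi P₀ P₁ X' n T j c} := by
      intro ω hω
      have h1 := Phi_shift P₀ P₁ hXeq T hd_le hω
      simp only [Set.mem_setOf_eq, Set.mem_preimage]
      refine (Phi_congr hnj hc ?_ ?_ ?_).mp h1
      · rw [hr₁_def]
        all_goals rfl
      · intro m hm1 hm2
        rw [hr₁_def]
        dsimp only
        by_cases hm : m = j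
        · rw [if_pos hm, if_pos hm, hpz₁ ω j hnj le_rfl]
          all_goals rfl
        · rw [if_neg hm, if_neg hm, hpz₁ ω m hm1 hm2]
          all_goals rfl
      · intro k hk
        rw [hr₁_def]
        dsimp only
        by_cases hkc : k = c
        · rw [if_pos hkc, if_pos hkc, hpw₁ ω c hc]
          all_goals rfl
        · rw [if_neg hkc, if_neg hkc, hpw₁ ω k hk]
          all_goals rfl
    -- step equalities
    have hEq₁ : {ω | ((fun i : S₁ => F i ω), F (Sum.inl ()) ω)
          ∈ r₁ ⁻¹' Phi P₀ P₁ X' n T j c}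
        = {ω | ((fun i : S₂ => F i ω), F (Sum.inr (Sum.inl j)) ω + 2 * A)
          ∈ r₂ ⁻¹' Phi P₀ P₁ X' n T j c} := by
      ext ω
      simp only [Set.mem_setOf_eq, Set.mem_preimage]
      apply Phi_congr hnj hc
      · rw [hr₁_def, hr₂_def]
        dsimp only
        rw [hpν₂ ω]
        all_goals rfl
      · intro m hm1 hm2
        rw [hr₁_def, hr₂_def]
        dsimp only
        by_cases hm : m = j
        · rw [if_pos hm, if_pos hm, hpz₁ ω j hnj le_rfl]
          all_goals rfl
        · rw [if_neg hm, if_neg hm, hpz₁ ω m hm1 hm2,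
            hpz₂ ω m hm1 (lt_of_le_of_ne hm2 hm)]
          all_goals rfl
      · intro k hk
        rw [hr₁_def, hr₂_def]
        dsimp only
        by_cases hkc : k = c
        · rw [if_pos hkc, if_pos hkc, hpw₁ ω c hc, hpw₂ ω c hc]
          all_goals rfl
        · rw [if_neg hkc, if_neg hkc, hpw₁ ω k hk, hpw₂ ω k hk]
          all_goals rfl
    have hEq₂ : {ω | ((fun i : S₂ => F i ω), F (Sum.inr (Sum.inl j)) ω)
          ∈ r₂ ⁻¹' Phi P₀ P₁ X' n T j c}
        = {ω | ((fun i : S₃ => F i ω), F (Sum.inr (Sum.inr c)) ω + |d|)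
          ∈ r₃ ⁻¹' Phi P₀ P₁ X' n T j c} := by
      ext ω
      simp only [Set.mem_setOf_eq, Set.mem_preimage]
      apply Phi_congr hnj hc
      · rw [hr₂_def, hr₃_def]
        dsimp only
        rw [hpν₂ ω, hpν₃ ω]
        all_goals rfl
      · intro m hm1 hm2
        rw [hr₂_def, hr₃_def]
        dsimp only
        by_cases hm : m = j
        · rw [if_pos hm, hm, hpz₃ ω j hnj le_rfl]
          all_goals rfl
        · rw [if_neg hm, hpz₂ ω m hm1 (lt_of_le_of_ne hm2 hm), hpz₃ ω m hm1 hm2]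
          all_goals rfl
      · intro k hk
        rw [hr₂_def, hr₃_def]
        dsimp only
        by_cases hkc : k = c
        · rw [if_pos hkc, if_pos hkc, hpw₂ ω c hc]
          all_goals rfl
        · rw [if_neg hkc, if_neg hkc, hpw₂ ω k hk, hpw₃ ω k hk hkc]
          all_goals rfl
    have hEq₃ : {ω | ((fun i : S₃ => F i ω), F (Sum.inr (Sum.inr c)) ω)
          ∈ r₃ ⁻¹' Phi P₀ P₁ X' n T j c}
        = V ⁻¹' Phi P₀ P₁ X' n T j c := by
      ext ω
      simp only [Set.mem_setOf_eq, Set.mem_preimage]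
      apply Phi_congr hnj hc
      · rw [hr₃_def]
        dsimp only
        rw [hpν₃ ω]
        all_goals rfl
      · intro m hm1 hm2
        rw [hr₃_def]
        dsimp only
        rw [hpz₃ ω m hm1 hm2]
        all_goals rfl
      · intro k hk
        rw [hr₃_def]
        dsimp only
        by_cases hkc : k = c
        · rw [if_pos hkc, hkc]
          all_goals rfl
        · rw [if_neg hkc, hpw₃ ω k hk hkc]
          all_goals rfl
    have hstep₁ := step_bound Prb F hFmeas hindep S₁ (Sum.inl ()) hni₁ hb4 hνlaw A hD₁
    have hstep₂ := step_bound Prb F hFmeas hindep S₂ (Sum.inr (Sum.inl j)) hni₂ hb8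
      (hZlaw j hnj) (2 * A) hD₂
    have hstep₃ := step_bound Prb F hFmeas hindep S₃ (Sum.inr (Sum.inr c)) hni₃ hb2
      (hWlaw c hc) |d| hD₃
    have hfinal : ∀ x : ENNReal,
        ENNReal.ofReal (Real.exp (|A| / (4 * A / ε))) *
          (ENNReal.ofReal (Real.exp (|2 * A| / (8 * A / ε))) *
            (ENNReal.ofReal (Real.exp (|(|d|)| / (2 * A / ε))) * x))
        ≤ ENNReal.ofReal (Real.exp ε) * x := by
      intro x
      have e1 : |A| / (4 * A / ε) = ε / 4 := by
        rw [abs_of_pos hApos]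
        field_simp
      have e2 : |2 * A| / (8 * A / ε) = ε / 4 := by
        rw [abs_of_pos (by linarith)]
        field_simp
        ring
      have e3 : |(|d|)| / (2 * A / ε) ≤ ε / 2 := by
        rw [abs_abs, div_le_iff₀ hb2]
        have h24 : ε / 2 * (2 * A / ε) = A := by
          field_simp
        rw [h24]
        exact hd_le
      have hcomb : Real.exp (|A| / (4 * A / ε)) * Real.exp (|2 * A| / (8 * A / ε)) *
          Real.exp (|(|d|)| / (2 * A / ε)) ≤ Real.exp ε := by
        rw [← Real.exp_add, ← Real.exp_add]
        apply Real.exp_le_exp.mpr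
        rw [e1, e2]
        linarith
      calc ENNReal.ofReal (Real.exp (|A| / (4 * A / ε))) *
            (ENNReal.ofReal (Real.exp (|2 * A| / (8 * A / ε))) *
              (ENNReal.ofReal (Real.exp (|(|d|)| / (2 * A / ε))) * x))
          = (ENNReal.ofReal (Real.exp (|A| / (4 * A / ε))) *
              ENNReal.ofReal (Real.exp (|2 * A| / (8 * A / ε))) *
              ENNReal.ofReal (Real.exp (|(|d|)| / (2 * A / ε)))) * x := by ring
        _ ≤ ENNReal.ofReal (Real.exp ε) * x := by
            apply mul_le_mul_left
            rw [← ENNReal.ofReal_mul (Real.exp_nonneg _),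
              ← ENNReal.ofReal_mul (by positivity)]
            exact ENNReal.ofReal_le_ofReal hcomb
    calc Prb (V ⁻¹' Phi P₀ P₁ X n T j c)
        ≤ Prb {ω | ((fun i : S₁ => F i ω), F (Sum.inl ()) ω + A)
            ∈ r₁ ⁻¹' Phi P₀ P₁ X' n T j c} := measure_mono hA1
      _ ≤ ENNReal.ofReal (Real.exp (|A| / (4 * A / ε))) *
            Prb {ω | ((fun i : S₁ => F i ω), F (Sum.inl ()) ω)
              ∈ r₁ ⁻¹' Phi P₀ P₁ X' n T j c} := hstep₁
      _ = ENNReal.ofReal (Real.exp (|A| / (4 * A / ε))) *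
            Prb {ω | ((fun i : S₂ => F i ω), F (Sum.inr (Sum.inl j)) ω + 2 * A)
              ∈ r₂ ⁻¹' Phi P₀ P₁ X' n T j c} := by rw [hEq₁]
      _ ≤ ENNReal.ofReal (Real.exp (|A| / (4 * A / ε))) *
            (ENNReal.ofReal (Real.exp (|2 * A| / (8 * A / ε))) *
              Prb {ω | ((fun i : S₂ => F i ω), F (Sum.inr (Sum.inl j)) ω)
                ∈ r₂ ⁻¹' Phi P₀ P₁ X' n T j c}) := mul_le_mul_right hstep₂ _
      _ = ENNReal.ofReal (Real.exp (|A| / (4 * A / ε))) *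
            (ENNReal.ofReal (Real.exp (|2 * A| / (8 * A / ε))) *
              Prb {ω | ((fun i : S₃ => F i ω), F (Sum.inr (Sum.inr c)) ω + |d|)
                ∈ r₃ ⁻¹' Phi P₀ P₁ X' n T j c}) := by rw [hEq₂]
      _ ≤ ENNReal.ofReal (Real.exp (|A| / (4 * A / ε))) *
            (ENNReal.ofReal (Real.exp (|2 * A| / (8 * A / ε))) *
              (ENNReal.ofReal (Real.exp (|(|d|)| / (2 * A / ε))) *
                Prb {ω | ((fun i : S₃ => F i ω), F (Sum.inr (Sum.inr c)) ω)
                  ∈ r₃ ⁻¹' Phi P₀ P₁ X' n T j c})) :=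
          mul_le_mul_right (mul_le_mul_right hstep₃ _) _
      _ = ENNReal.ofReal (Real.exp (|A| / (4 * A / ε))) *
            (ENNReal.ofReal (Real.exp (|2 * A| / (8 * A / ε))) *
              (ENNReal.ofReal (Real.exp (|(|d|)| / (2 * A / ε))) *
                Prb (V ⁻¹' Phi P₀ P₁ X' n T j c))) := by rw [hEq₃]
      _ ≤ ENNReal.ofReal (Real.exp ε) * Prb (V ⁻¹' Phi P₀ P₁ X' n T j c) := hfinal _
  have haux : ∀ a b : ℕ × ℕ, a.1 < b.1 → ∀ ω, ω ∈ Ev X' a.1 a.2 → ω ∈ Ev X' b.1 b.2 → False := by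
    intro a b hab ω ha hb
    rw [hEv_def] at ha hb
    dsimp only at ha hb
    split_ifs at ha with hca
    swap
    · exact absurd ha (Set.notMem_empty ω)
    split_ifs at hb with hcb
    swap
    · exact absurd hb (Set.notMem_empty ω)
    obtain ⟨⟨k, hk, hlt⟩, -, -⟩ := ha
    obtain ⟨-, h2, -⟩ := hb
    have hle := h2 a.1 (Finset.mem_Ico.mpr ⟨hca.1, hab⟩) k hk
    linarith
  have hdisj : Pairwise (Function.onFun Disjoint fun p : ℕ × ℕ => Ev X' p.1 p.2) := by
    intro a b hne
    simp only [Function.onFun]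
    rw [Set.disjoint_left]
    intro ω ha hb
    rcases lt_trichotomy a.1 b.1 with h | h | h
    · exact haux a b h ω ha hb
    · have hc2 : a.2 ≠ b.2 := fun h2 => hne (Prod.ext h h2)
      rw [hEv_def] at ha hb
      dsimp only at ha hb
      split_ifs at ha with hca
      swap
      · exact absurd ha (Set.notMem_empty ω)
      split_ifs at hb with hcb
      swap
      · exact absurd hb (Set.notMem_empty ω)
      obtain ⟨-, -, h3a⟩ := ha
      obtain ⟨-, -, h3b⟩ := hb
      have l1 := h3a b.2 hcb.2.1 (Ne.symm hc2)
      have l2 := h3b a.2 hca.2.1 hc2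
      rw [← h] at l2
      linarith
    · exact haux b a h ω hb ha
  have hsubL : {ω | ∃ j, HaltsAt P₀ P₁ X n T ν Z j ω ∧ (j, κ j ω + (j - n)) ∈ S}
      ⊆ (⋃ p : ℕ × ℕ, Ev X p.1 p.2) ∪ Tie := by
    intro ω hω
    obtain ⟨j, hhalt, hjS⟩ := hω
    by_cases htie : ω ∈ Tie
    · exact Or.inr htie
    · left
      refine Set.mem_iUnion.mpr ⟨(j, κ j ω), ?_⟩
      rw [hEv_def]
      dsimp only
      rw [if_pos ⟨hhalt.1, (hκ j hhalt.1 ω).1, hjS⟩]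
      simp only [hV_def, Phi, Set.mem_preimage, Set.mem_setOf_eq]
      refine ⟨hhalt.2.1, ?_, ?_⟩
      · intro j' hj' k hk
        by_contra hltc
        push_neg at hltc
        exact hhalt.2.2 j' (Finset.mem_Ico.mp hj').1 (Finset.mem_Ico.mp hj').2 ⟨k, hk, hltc⟩
      · intro k hk hkc
        have hle := (hκ j hhalt.1 ω).2 k hk
        refine lt_of_le_of_ne hle fun heq => htie ?_
        rw [hTie_def]
        exact Set.mem_iUnion.mpr
          ⟨(j, k, κ j ω), ⟨⟨hk, (hκ j hhalt.1 ω).1, hkc⟩, by linarith⟩⟩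
  have hsubR : (⋃ p : ℕ × ℕ, Ev X' p.1 p.2)
      ⊆ {ω | ∃ j, HaltsAt P₀ P₁ X' n T ν Z j ω ∧ (j, κ' j ω + (j - n)) ∈ S} := by
    intro ω hω
    obtain ⟨p, hp⟩ := Set.mem_iUnion.mp hω
    obtain ⟨j, c⟩ := p
    rw [hEv_def] at hp
    dsimp only at hp
    split_ifs at hp with hcond
    swap
    · exact absurd hp (Set.notMem_empty ω)
    obtain ⟨hnj, hc, hjS⟩ := hcond
    simp only [hV_def, Phi, Set.mem_preimage, Set.mem_setOf_eq] at hp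
    obtain ⟨h1, h2, h3⟩ := hp
    have hκ'c : κ' j ω = c := by
      by_contra hne
      have l1 := h3 (κ' j ω) (hκ' j hnj ω).1 hne
      have l2 := (hκ' j hnj ω).2 c hc
      linarith
    refine ⟨j, ⟨hnj, h1, ?_⟩, ?_⟩
    · intro j' hn' hj' htrig
      obtain ⟨k, hk, hlt⟩ := htrig
      have := h2 j' (Finset.mem_Ico.mpr ⟨hn', hj'⟩) k hk
      linarith
    · rw [hκ'c]
      exact hjS
  calc Prb {ω | ∃ j, HaltsAt P₀ P₁ X n T ν Z j ω ∧ (j, κ j ω + (j - n)) ∈ S}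
      ≤ Prb ((⋃ p : ℕ × ℕ, Ev X p.1 p.2) ∪ Tie) := measure_mono hsubL
    _ ≤ Prb (⋃ p : ℕ × ℕ, Ev X p.1 p.2) + Prb Tie := measure_union_le _ _
    _ = Prb (⋃ p : ℕ × ℕ, Ev X p.1 p.2) := by rw [hTie0, add_zero]
    _ ≤ ∑' p : ℕ × ℕ, Prb (Ev X p.1 p.2) := measure_iUnion_le _
    _ ≤ ∑' p : ℕ × ℕ, ENNReal.ofReal (Real.exp ε) * Prb (Ev X' p.1 p.2) :=
        ENNReal.tsum_le_tsum fun p => key p.1 p.2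
    _ = ENNReal.ofReal (Real.exp ε) * ∑' p : ℕ × ℕ, Prb (Ev X' p.1 p.2) :=
        ENNReal.tsum_mul_left
    _ = ENNReal.ofReal (Real.exp ε) * Prb (⋃ p : ℕ × ℕ, Ev X' p.1 p.2) := by
        rw [measure_iUnion hdisj fun p => hEvmeas X' p.1 p.2]
    _ ≤ ENNReal.ofReal (Real.exp ε) *
        Prb {ω | ∃ j, HaltsAt P₀ P₁ X' n T ν Z j ω ∧ (j, κ' j ω + (j - n)) ∈ S} :=
        mul_le_mul_right (measure_mono hsubR) _
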